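/- The Euler product 𝒢(s) := ∏_{p odd prime} (1 − p^{−2}·(1 − p^{−1−s})/(1 − p^{−2−s})) converges (the family of factors is multipliable) for every s ∈ ℂ with Re(s) > −1; the function 𝒢 so defined is holomorphic (complex differentiable) on the half-plane {s : Re(s) > −1}; and there is a constant C > 0 such that |𝒢(s)| ≤ C for all s with Re(s) > −1. -/

import Mathlib

/-- The Euler factor of `𝒢(s)` at an odd prime `p`. -/
noncomputable def GFactor (s : ℂ) (p : {p : ℕ // p.Prime ∧ Odd p}) : ℂ :=
  (1 : ℂ) - (p.1 : ℂ) ^ (-(2 : ℂ)) *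
    ((1 - (p.1 : ℂ) ^ (-(1 : ℂ) - s)) / (1 - (p.1 : ℂ) ^ (-(2 : ℂ) - s)))

open Complex

lemma three_le_odd_prime (p : {p : ℕ // p.Prime ∧ Odd p}) : 3 ≤ p.1 := by
  have h2 := p.2.1.two_le
  have : p.1 ≠ 2 := by
    intro h
    have ho := p.2.2
    rw [h] at ho
    exact (by decide : ¬ Odd 2) ho
  omega

lemma GFactor_den_norm (p : {p : ℕ // p.Prime ∧ Odd p}) {s : ℂ} (hs : -1 < s.re) :
    (2 : ℝ) / 3 ≤ ‖(1 : ℂ) - (p.1 : ℂ) ^ (-(2 : ℂ) - s)‖ := by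
  have hp3 : (3 : ℝ) ≤ (p.1 : ℝ) := by exact_mod_cast three_le_odd_prime p
  have hp1 : (1 : ℝ) ≤ (p.1 : ℝ) := by linarith
  have hpos : 0 < p.1 := by have := three_le_odd_prime p; omega
  have h1 : ‖(p.1 : ℂ) ^ (-(2 : ℂ) - s)‖ = (p.1 : ℝ) ^ ((-(2 : ℂ) - s).re) :=
    norm_natCast_cpow_of_pos hpos _
  have h2 : (p.1 : ℝ) ^ ((-(2 : ℂ) - s).re) ≤ (p.1 : ℝ) ^ (-1 : ℝ) := by
    apply Real.rpow_le_rpow_of_exponent_le hp1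
    simp only [sub_re, neg_re]
    norm_num
    linarith
  have h3 : (p.1 : ℝ) ^ (-1 : ℝ) ≤ 1 / 3 := by
    rw [Real.rpow_neg_one]
    rw [inv_le_comm₀ (by linarith) (by norm_num)]
    linarith
  have : ‖(p.1 : ℂ) ^ (-(2 : ℂ) - s)‖ ≤ 1 / 3 := by rw [h1]; linarith
  calc (2 : ℝ) / 3 = 1 - 1 / 3 := by norm_num
  _ ≤ ‖(1 : ℂ)‖ - ‖(p.1 : ℂ) ^ (-(2 : ℂ) - s)‖ := by rw [norm_one]; linarith
  _ ≤ ‖(1 : ℂ) - (p.1 : ℂ) ^ (-(2 : ℂ) - s)‖ := norm_sub_norm_le _ _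

lemma GFactor_sub_one_norm (p : {p : ℕ // p.Prime ∧ Odd p}) {s : ℂ} (hs : -1 < s.re) :
    ‖GFactor s p - 1‖ ≤ 3 / (p.1 : ℝ) ^ 2 := by
  have hp3 : (3 : ℝ) ≤ (p.1 : ℝ) := by exact_mod_cast three_le_odd_prime p
  have hp1 : (1 : ℝ) ≤ (p.1 : ℝ) := by linarith
  have hpos : 0 < p.1 := by have := three_le_odd_prime p; omega
  have hA : ‖(p.1 : ℂ) ^ (-(2 : ℂ))‖ = ((p.1 : ℝ) ^ 2)⁻¹ := by
    rw [norm_natCast_cpow_of_pos hpos]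
    have : ((-(2 : ℂ)).re) = (-2 : ℝ) := by simp
    rw [this, Real.rpow_neg (by linarith), ← Real.rpow_natCast (p.1 : ℝ) 2]
    norm_num
  have hB : ‖(1 : ℂ) - (p.1 : ℂ) ^ (-(1 : ℂ) - s)‖ ≤ 2 := by
    have h1 : ‖(p.1 : ℂ) ^ (-(1 : ℂ) - s)‖ = (p.1 : ℝ) ^ ((-(1 : ℂ) - s).re) :=
      norm_natCast_cpow_of_pos hpos _
    have h2 : (p.1 : ℝ) ^ ((-(1 : ℂ) - s).re) ≤ 1 := by
      apply Real.rpow_le_one_of_one_le_of_nonpos hp1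
      simp only [sub_re, neg_re, one_re]
      linarith
    calc ‖(1 : ℂ) - (p.1 : ℂ) ^ (-(1 : ℂ) - s)‖
        ≤ ‖(1 : ℂ)‖ + ‖(p.1 : ℂ) ^ (-(1 : ℂ) - s)‖ := norm_sub_le _ _
    _ ≤ 1 + (p.1 : ℝ) ^ ((-(1 : ℂ) - s).re) := by rw [norm_one, h1]
    _ ≤ 2 := by linarith
  have hC := GFactor_den_norm p hs
  have hsq : (0 : ℝ) < (p.1 : ℝ) ^ 2 := by positivity
  have key : GFactor s p - 1 = -((p.1 : ℂ) ^ (-(2 : ℂ)) *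
      ((1 - (p.1 : ℂ) ^ (-(1 : ℂ) - s)) / (1 - (p.1 : ℂ) ^ (-(2 : ℂ) - s)))) := by
    rw [GFactor]; ring
  rw [key, norm_neg, norm_mul, norm_div, hA]
  have hq : ‖(1 : ℂ) - (p.1 : ℂ) ^ (-(1 : ℂ) - s)‖ / ‖(1 : ℂ) - (p.1 : ℂ) ^ (-(2 : ℂ) - s)‖
      ≤ 3 := by
    calc ‖(1 : ℂ) - (p.1 : ℂ) ^ (-(1 : ℂ) - s)‖ / ‖(1 : ℂ) - (p.1 : ℂ) ^ (-(2 : ℂ) - s)‖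
        ≤ 2 / (2 / 3) := div_le_div₀ (by norm_num) hB (by norm_num) hC
    _ = 3 := by norm_num
  calc ((p.1 : ℝ) ^ 2)⁻¹ * (‖(1 : ℂ) - (p.1 : ℂ) ^ (-(1 : ℂ) - s)‖ /
        ‖(1 : ℂ) - (p.1 : ℂ) ^ (-(2 : ℂ) - s)‖)
      ≤ ((p.1 : ℝ) ^ 2)⁻¹ * 3 := by
        apply mul_le_mul_of_nonneg_left hq (by positivity)
  _ = 3 / (p.1 : ℝ) ^ 2 := by field_simp

lemma GFactor_sub_one_small (p : {p : ℕ // p.Prime ∧ Odd p}) {s : ℂ} (hs : -1 < s.re) :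
    ‖GFactor s p - 1‖ ≤ 1 / 3 := by
  have h := GFactor_sub_one_norm p hs
  have hp3 : (3 : ℝ) ≤ (p.1 : ℝ) := by exact_mod_cast three_le_odd_prime p
  have : 3 / (p.1 : ℝ) ^ 2 ≤ 1 / 3 := by
    rw [div_le_div_iff₀ (by positivity) (by norm_num)]
    nlinarith
  linarith

lemma GFactor_mem_slitPlane (p : {p : ℕ // p.Prime ∧ Odd p}) {s : ℂ} (hs : -1 < s.re) :
    GFactor s p ∈ Complex.slitPlane := by
  have h := GFactor_sub_one_small p hs
  rw [Complex.mem_slitPlane_iff]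
  left
  have h1 : |(GFactor s p - 1).re| ≤ ‖GFactor s p - 1‖ := Complex.abs_re_le_norm _
  have h2 : (GFactor s p - 1).re = (GFactor s p).re - 1 := by simp
  rw [h2] at h1
  have := abs_le.mp h1
  linarith [this.1]

lemma GFactor_log_norm (p : {p : ℕ // p.Prime ∧ Odd p}) {s : ℂ} (hs : -1 < s.re) :
    ‖Complex.log (GFactor s p)‖ ≤ 5 / (p.1 : ℝ) ^ 2 := by
  have h := GFactor_sub_one_norm p hs
  have hsmall := GFactor_sub_one_small p hs
  have hsq : (0 : ℝ) < (p.1 : ℝ) ^ 2 := by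
    have hp3 : (3 : ℝ) ≤ (p.1 : ℝ) := by exact_mod_cast three_le_odd_prime p
    positivity
  have key : Complex.log (GFactor s p) = Complex.log (1 + (GFactor s p - 1)) := by ring_nf
  rw [key]
  have hb := Complex.norm_log_one_add_half_le_self
    (z := GFactor s p - 1) (by linarith)
  calc ‖Complex.log (1 + (GFactor s p - 1))‖ ≤ 3 / 2 * ‖GFactor s p - 1‖ := hb
  _ ≤ 3 / 2 * (3 / (p.1 : ℝ) ^ 2) := by linarith
  _ = (9 / 2) / (p.1 : ℝ) ^ 2 := by ring
  _ ≤ 5 / (p.1 : ℝ) ^ 2 := by gcongr; norm_num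

lemma summable_bound : Summable (fun p : {p : ℕ // p.Prime ∧ Odd p} => 5 / (p.1 : ℝ) ^ 2) := by
  have h : Summable (fun n : ℕ => 5 / (n : ℝ) ^ 2) := by
    have := Real.summable_one_div_nat_pow (p := 2) |>.mpr (by norm_num)
    simpa [div_eq_mul_inv] using this.mul_left 5
  exact h.subtype _

lemma GFactor_log_summable {s : ℂ} (hs : -1 < s.re) :
    Summable (fun p : {p : ℕ // p.Prime ∧ Odd p} => Complex.log (GFactor s p)) := by
  apply Summable.of_norm
  apply Summable.of_nonneg_of_le (fun p => norm_nonneg _)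
    (fun p => GFactor_log_norm p hs) summable_bound

lemma GFactor_differentiableOn (p : {p : ℕ // p.Prime ∧ Odd p}) :
    DifferentiableOn ℂ (fun s => GFactor s p) {s : ℂ | -1 < s.re} := by
  have hpne : (p.1 : ℂ) ≠ 0 := by
    have h3 := three_le_odd_prime p
    simp only [ne_eq, Nat.cast_eq_zero]
    omega
  have h1 : Differentiable ℂ (fun s : ℂ => (p.1 : ℂ) ^ (-(1 : ℂ) - s)) := by
    apply Differentiable.const_cpow _ (Or.inl hpne)
    exact (differentiable_const _).sub differentiable_id
  have h2 : Differentiable ℂ (fun s : ℂ => (p.1 : ℂ) ^ (-(2 : ℂ) - s)) := by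
    apply Differentiable.const_cpow _ (Or.inl hpne)
    exact (differentiable_const _).sub differentiable_id
  intro s hs
  have hden : (1 : ℂ) - (p.1 : ℂ) ^ (-(2 : ℂ) - s) ≠ 0 := by
    intro h
    have := GFactor_den_norm p hs
    rw [h, norm_zero] at this
    norm_num at this
  apply DifferentiableWithinAt.sub (differentiableWithinAt_const _)
  apply DifferentiableWithinAt.mul (differentiableWithinAt_const _)
  apply DifferentiableWithinAt.div
  · exact ((differentiable_const _).sub h1).differentiableAt.differentiableWithinAt
  · exact ((differentiable_const _).sub h2).differentiableAt.differentiableWithinAt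
  · exact hden

lemma tprod_eq_exp_tsum {s : ℂ} (hs : -1 < s.re) :
    (∏' p : {p : ℕ // p.Prime ∧ Odd p}, GFactor s p) =
      Complex.exp (∑' p : {p : ℕ // p.Prime ∧ Odd p}, Complex.log (GFactor s p)) := by
  have key := Complex.cexp_tsum_eq_tprod
    (f := fun (p : {p : ℕ // p.Prime ∧ Odd p}) => GFactor s p)
    (fun p => Complex.slitPlane_ne_zero (GFactor_mem_slitPlane p hs))
    (GFactor_log_summable hs)
  exact key.symm

/-- The Euler product `𝒢(s) = ∏_{p odd} (1 − p^{−2}(1−p^{−1−s})/(1−p^{−2−s}))` converges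
for `Re(s) > −1`, defines a holomorphic function on this half-plane, and is bounded there. -/
theorem GEuler_properties :
    (∀ s : ℂ, -1 < s.re → Multipliable (GFactor s)) ∧
    DifferentiableOn ℂ (fun s : ℂ => ∏' p : {p : ℕ // p.Prime ∧ Odd p}, GFactor s p)
      {s : ℂ | -1 < s.re} ∧
    (∃ C : ℝ, 0 < C ∧ ∀ s : ℂ, -1 < s.re →
      ‖∏' p : {p : ℕ // p.Prime ∧ Odd p}, GFactor s p‖ ≤ C) := by
  have hopen : IsOpen {s : ℂ | -1 < s.re} := isOpen_lt continuous_const Complex.continuous_re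
  refine ⟨?_, ?_, ?_⟩
  · intro s hs
    exact Complex.multipliable_of_summable_log
      (f := fun (p : {p : ℕ // p.Prime ∧ Odd p}) => GFactor s p)
      (GFactor_log_summable hs)
  · have hlog : DifferentiableOn ℂ
        (fun s : ℂ => ∑' p : {p : ℕ // p.Prime ∧ Odd p}, Complex.log (GFactor s p))
        {s : ℂ | -1 < s.re} := by
      apply differentiableOn_tsum_of_summable_norm summable_bound
      · intro p
        apply DifferentiableOn.clog (GFactor_differentiableOn p)
        exact fun s hs => GFactor_mem_slitPlane p hs
      · exact hopen
      · exact fun p w hw => GFactor_log_norm p hw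
    exact (hlog.cexp).congr fun s hs => tprod_eq_exp_tsum hs
  · refine ⟨Real.exp (∑' p : {p : ℕ // p.Prime ∧ Odd p}, 5 / (p.1 : ℝ) ^ 2),
      Real.exp_pos _, fun s hs => ?_⟩
    rw [tprod_eq_exp_tsum hs, Complex.norm_exp]
    apply Real.exp_le_exp.mpr
    have hsn : Summable (fun p : {p : ℕ // p.Prime ∧ Odd p} =>
        ‖Complex.log (GFactor s p)‖) :=
      Summable.of_nonneg_of_le (fun p => norm_nonneg _)
        (fun p => GFactor_log_norm p hs) summable_bound
    calc (∑' p : {p : ℕ // p.Prime ∧ Odd p}, Complex.log (GFactor s p)).re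
        ≤ ‖∑' p : {p : ℕ // p.Prime ∧ Odd p}, Complex.log (GFactor s p)‖ :=
          Complex.re_le_norm _
    _ ≤ ∑' p : {p : ℕ // p.Prime ∧ Odd p}, ‖Complex.log (GFactor s p)‖ :=
          norm_tsum_le_tsum_norm hsn
    _ ≤ ∑' p : {p : ℕ // p.Prime ∧ Odd p}, 5 / (p.1 : ℝ) ^ 2 :=
          Summable.tsum_le_tsum (fun p => GFactor_log_norm p hs) hsn summable_bound
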